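/- Let G and H be connected graphs, let V(H) = {v_1, …, v_n} with n ≥ 3, and consider G □ H with labeled copies G_1, …, G_n of G, where G_i is the fiber of G over the vertex v_i of H. Let c be an exact r-coloring of G □ H with r ≥ 3 that contains no rainbow 3-AP, and suppose each copy G_i uses at most 2 colors. Then for every edge v_i v_j of H, the number of distinct colors used on V(G_i) ∪ V(G_j) is at most 2. -/

import Mathlib

open SimpleGraph

/-- `v` lists the vertices of a `k`-term arithmetic progression in `G`:
consecutive vertices are at a common distance `d`. -/
def IsAPIn {V : Type*} (G : SimpleGraph V) (k : ℕ) (v : Fin k → V) : Prop :=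
  ∃ d : ℕ, ∀ (i : ℕ) (h : i + 1 < k),
    G.dist (v ⟨i, by omega⟩) (v ⟨i + 1, h⟩) = d

/-- The coloring `c` admits a rainbow `k`-AP in `G`: a `k`-AP whose vertices
are pairwise distinct and receive pairwise distinct colors. -/
def HasRainbowAP {V α : Type*} (G : SimpleGraph V) (k : ℕ) (c : V → α) : Prop :=
  ∃ v : Fin k → V, IsAPIn G k v ∧ Function.Injective (c ∘ v)

/-- The anti-van der Waerden number `aw(G,k)`: the least positive `r` such that
every exact `r`-coloring of `G` contains a rainbow `k`-AP.  (For `r = |V(G)|+1`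
there is no surjection onto `r` colors, so the defining set is nonempty and
`aw(G,k) ≤ |V(G)|+1` automatically, matching the convention.) -/
noncomputable def aw {V : Type*} [Fintype V] (G : SimpleGraph V) (k : ℕ) : ℕ :=
  sInf {r : ℕ | 0 < r ∧ ∀ c : V → Fin r, Function.Surjective c → HasRainbowAP G k c}

namespace TCAF

variable {VG VH : Type*}

lemma walk_ge {G : SimpleGraph VG} {H : SimpleGraph VH}
    (hG : G.Connected) (hH : H.Connected) :
    ∀ {x y : VG × VH} (w : (G □ H).Walk x y),
      G.dist x.1 y.1 + H.dist x.2 y.2 ≤ w.length := by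
  intro x y w
  induction w with
  | nil => simp
  | @cons a b y hadj w ih =>
    rcases (SimpleGraph.boxProd_adj).1 hadj with ⟨h1, h2⟩ | ⟨h1, h2⟩
    · have t1 : G.dist a.1 y.1 ≤ G.dist a.1 b.1 + G.dist b.1 y.1 := hG.dist_triangle
      have e1 : G.dist a.1 b.1 = 1 := SimpleGraph.dist_eq_one_iff_adj.2 h1
      have e2 : H.dist a.2 y.2 = H.dist b.2 y.2 := by rw [h2]
      simp only [Walk.length_cons]
      omega
    · have t1 : H.dist a.2 y.2 ≤ H.dist a.2 b.2 + H.dist b.2 y.2 := hH.dist_triangle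
      have e1 : H.dist a.2 b.2 = 1 := SimpleGraph.dist_eq_one_iff_adj.2 h1
      have e2 : G.dist a.1 y.1 = G.dist b.1 y.1 := by rw [h2]
      simp only [Walk.length_cons]
      omega

lemma boxProd_dist {G : SimpleGraph VG} {H : SimpleGraph VH}
    (hG : G.Connected) (hH : H.Connected) (a a' : VG) (p p' : VH) :
    (G □ H).dist (a, p) (a', p') = G.dist a a' + H.dist p p' := by
  refine le_antisymm ?_ ?_
  · obtain ⟨w1, hw1⟩ := hG.exists_walk_length_eq_dist a a'
    obtain ⟨w2, hw2⟩ := hH.exists_walk_length_eq_dist p p'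
    have hw : ((w1.boxProdLeft H p).append (w2.boxProdRight G a')).length
        = G.dist a a' + H.dist p p' := by
      rw [Walk.length_append, ← hw1, ← hw2]
      exact congrArg₂ (· + ·) (Walk.length_map _ _) (Walk.length_map _ _)
    calc (G □ H).dist (a, p) (a', p') ≤ _ := SimpleGraph.dist_le _
      _ = _ := hw
  · obtain ⟨w, hw⟩ := (hG.boxProd hH).exists_walk_length_eq_dist (a, p) (a', p')
    have := walk_ge hG hH w
    simp only [hw] at this
    exact this

/-- Positions along a geodesic walk realize the distances. -/
lemma getVert_dist {G : SimpleGraph VG} (hG : G.Connected) {u v : VG}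
    (w : G.Walk u v) (hw : w.length = G.dist u v) {t : ℕ} (ht : t ≤ w.length) :
    G.dist u (w.getVert t) = t ∧ G.dist (w.getVert t) v = w.length - t := by
  have A : ∀ (u' v' : VG) (w' : G.Walk u' v') (s : ℕ), s ≤ w'.length →
      G.dist u' (w'.getVert s) ≤ s := by
    intro u' v' w' s
    induction s with
    | zero => intro _; simp [Walk.getVert_zero]
    | succ n ih =>
      intro hs
      have h1 : G.dist u' (w'.getVert n) ≤ n := ih (by omega)
      have h2 : G.Adj (w'.getVert n) (w'.getVert (n + 1)) :=
        w'.adj_getVert_succ (by omega)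
      calc G.dist u' (w'.getVert (n+1))
          ≤ G.dist u' (w'.getVert n) + G.dist (w'.getVert n) (w'.getVert (n+1)) :=
            hG.dist_triangle
        _ ≤ n + 1 := by
            rw [SimpleGraph.dist_eq_one_iff_adj.2 h2]; omega
  have h1 : G.dist u (w.getVert t) ≤ t := A u v w t ht
  have h2 : G.dist (w.getVert t) v ≤ w.length - t := by
    have := A v u w.reverse (w.length - t) (by rw [Walk.length_reverse]; omega)
    rw [Walk.getVert_reverse] at this
    have he : w.length - (w.length - t) = t := by omega
    rw [he] at this
    rw [G.dist_comm]
    exact this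
  have h3 : G.dist u v ≤ G.dist u (w.getVert t) + G.dist (w.getVert t) v :=
    hG.dist_triangle
  omega

variable {G : SimpleGraph VG} {H : SimpleGraph VH}

lemma RB_of_not {r : ℕ} {c : VG × VH → Fin r} (hnr : ¬ HasRainbowAP (G □ H) 3 c) :
    ∀ x y w : VG × VH, (G □ H).dist x y = (G □ H).dist y w →
      c x ≠ c y → c y ≠ c w → c x = c w := by
  intro x y w hd h1 h2
  by_contra h3
  apply hnr
  refine ⟨![x, y, w], ⟨(G □ H).dist x y, ?_⟩, ?_⟩
  · intro i hi
    have hi' : i = 0 ∨ i = 1 := by omega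
    rcases hi' with rfl | rfl
    · rfl
    · exact hd.symm
  · intro a b hab
    fin_cases a <;> fin_cases b <;>
      simp only [Function.comp_apply, Matrix.cons_val_zero, Matrix.cons_val_one,
        Matrix.head_cons, Matrix.cons_val_two, Matrix.tail_cons, Fin.mk_zero,
        Fin.mk_one, Fin.isValue] at hab ⊢ <;>
      first
        | rfl
        | exact absurd hab h1 | exact absurd hab h2 | exact absurd hab h3
        | exact absurd hab.symm h1 | exact absurd hab.symm h2 | exact absurd hab.symm h3

lemma fiber_two [Fintype VG] {r : ℕ} {c : VG × VH → Fin r} {i : VH}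
    (h2 : (((Finset.univ : Finset VG)).image (fun x => c (x, i))).card ≤ 2)
    {a b : VG} {A B : Fin r} (hA : c (a, i) = A) (hB : c (b, i) = B) (hAB : A ≠ B)
    (x : VG) : c (x, i) = A ∨ c (x, i) = B := by
  by_contra hx
  push_neg at hx
  have hsub : ({A, B, c (x, i)} : Finset (Fin r)) ⊆
      ((Finset.univ : Finset VG)).image (fun x => c (x, i)) := by
    intro y hy
    simp only [Finset.mem_insert, Finset.mem_singleton] at hy
    rcases hy with rfl | rfl | rfl
    · exact Finset.mem_image.2 ⟨a, Finset.mem_univ _, hA⟩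
    · exact Finset.mem_image.2 ⟨b, Finset.mem_univ _, hB⟩
    · exact Finset.mem_image.2 ⟨x, Finset.mem_univ _, rfl⟩
  have hcard : ({A, B, c (x, i)} : Finset (Fin r)).card = 3 := by
    rw [Finset.card_insert_of_notMem, Finset.card_insert_of_notMem] <;>
      simp [hAB, Ne.symm hx.1, Ne.symm hx.2]
  have := Finset.card_le_card hsub
  omega

lemma third_fiber [Fintype VH] (hH : H.Connected) (hcard : 3 ≤ Fintype.card VH)
    {p q : VH} (hpq : H.Adj p q) :
    ∃ k, k ≠ p ∧ k ≠ q ∧ (H.Adj k p ∨ H.Adj k q) := by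
  classical
  have ⟨k0, hk0p, hk0q⟩ : ∃ k0, k0 ≠ p ∧ k0 ≠ q := by
    by_contra hcon
    push_neg at hcon
    have hsub : (Finset.univ : Finset VH) ⊆ {p, q} := by
      intro x _
      rcases Classical.em (x = p) with rfl | hxp
      · simp
      · simp [hcon x hxp]
    have h1 := Finset.card_le_card hsub
    have h2 : ({p, q} : Finset VH).card ≤ 2 :=
      (Finset.card_insert_le _ _).trans (by simp)
    simp only [Finset.card_univ] at h1
    omega
  have haux : ∀ (x y : VH) (w : H.Walk x y), y = p → x ≠ p → x ≠ q →
      ∃ k, k ≠ p ∧ k ≠ q ∧ (H.Adj k p ∨ H.Adj k q) := by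
    intro x y w
    induction w with
    | nil => intro h1 h2 _; exact absurd h1 h2
    | @cons a a' b hadj w ih =>
      intro hyp hap haq
      rcases Classical.em (a' = p) with rfl | hx'p
      · exact ⟨a, hap, haq, Or.inl hadj⟩
      · rcases Classical.em (a' = q) with rfl | hx'q
        · exact ⟨a, hap, haq, Or.inr hadj⟩
        · exact ih hyp hx'p hx'q
  obtain ⟨w⟩ := hH.preconnected k0 p
  exact haux k0 p w rfl hk0p hk0q

/-- A configuration: adjacent fibers `p, q`, two colors in fiber `p` at
`z` and `b`, and a third color at `(z, q)`. -/
def IsCfg (H : SimpleGraph VH) {r : ℕ} (c : VG × VH → Fin r) (p q : VH) (z b : VG) : Prop :=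
  H.Adj p q ∧ c (z, p) ≠ c (b, p) ∧ c (z, q) ≠ c (z, p) ∧ c (z, q) ≠ c (b, p)

section Core

variable [Fintype VG] {r : ℕ} {c : VG × VH → Fin r}

/-- For a minimal configuration, `(b,q)` gets the color of `(z,p)`. -/
lemma cfg_bq (hG : G.Connected) (hH : H.Connected)
    (RB : ∀ x y w : VG × VH, (G □ H).dist x y = (G □ H).dist y w →
      c x ≠ c y → c y ≠ c w → c x = c w)
    (h2 : ∀ i : VH, (((Finset.univ : Finset VG)).image (fun x => c (x, i))).card ≤ 2)
    {p q : VH} {z b : VG} (hcfg : IsCfg H c p q z b)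
    (hmin : ∀ p' q' z' b', IsCfg H c p' q' z' b' → G.dist z b ≤ G.dist z' b') :
    c (b, q) = c (z, p) := by
  obtain ⟨hpq, hAB, hGA, hGB⟩ := hcfg
  set m := G.dist z b with hm
  have hzb : z ≠ b := fun h => hAB (by rw [h])
  have hm1 : 1 ≤ m := hG.pos_dist_of_ne hzb
  have hdpq : H.dist p q = 1 := SimpleGraph.dist_eq_one_iff_adj.2 hpq
  have hdqp : H.dist q p = 1 := by rw [SimpleGraph.dist_comm]; exact hdpq
  have hdpp : H.dist p p = 0 := SimpleGraph.dist_self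
  have hdqq : H.dist q q = 0 := SimpleGraph.dist_self
  have pd : ∀ (a a' : VG) (s s' : VH),
      (G □ H).dist (a, s) (a', s') = G.dist a a' + H.dist s s' :=
    fun a a' s s' => boxProd_dist hG hH a a' s s'
  have fibp : ∀ x, c (x, p) = c (z, p) ∨ c (x, p) = c (b, p) :=
    fun x => fiber_two (h2 p) (a := z) (b := b) (A := c (z, p)) (B := c (b, p))
      rfl rfl hAB x
  have F1 : ∀ x, G.dist z x < m → c (x, p) = c (z, p) := by
    intro x hx
    rcases fibp x with h | h
    · exact h
    · exfalso
      have hc : IsCfg H c p q z x :=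
        ⟨hpq, by rw [h]; exact hAB, hGA, by rw [h]; exact hGB⟩
      have := hmin _ _ _ _ hc
      omega
  obtain ⟨w, hw⟩ := hG.exists_walk_length_eq_dist z b
  have hQ : ∀ t, t ≤ m → G.dist z (w.getVert t) = t ∧ G.dist (w.getVert t) b = m - t := by
    intro t ht
    have h := getVert_dist hG w hw (t := t) (by omega)
    rwa [hw] at h
  obtain ⟨hy1, hy2⟩ := hQ (m - 1) (by omega)
  set y := w.getVert (m - 1) with hydef
  have hdgbb : G.dist b b = 0 := SimpleGraph.dist_self
  have hdby : G.dist b y = 1 := by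
    rw [SimpleGraph.dist_comm]; omega
  have hdyy : G.dist y y = 0 := SimpleGraph.dist_self
  have hcyA : c (y, p) = c (z, p) := F1 y (by omega)
  -- the color of (b, q) lies in {A, B}
  have hψb : c (b, q) = c (z, p) ∨ c (b, q) = c (b, p) := by
    rcases Classical.em (c (b, q) = c (b, p)) with h | h
    · exact Or.inr h
    · left
      have hr := RB (y, p) (b, p) (b, q) (by rw [pd, pd]; omega) ?_ ?_
      · rw [hcyA] at hr; exact hr.symm
      · rw [hcyA]; exact hAB
      · exact fun hh => h hh.symm
  rcases hψb with h | hψbB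
  · exact h
  exfalso
  -- fiber q is {Γ, B}; propagate Γ along the geodesic
  have fibq : ∀ x, c (x, q) = c (z, q) ∨ c (x, q) = c (b, p) :=
    fun x => fiber_two (h2 q) (a := z) (b := b) (A := c (z, q)) (B := c (b, p))
      rfl hψbB hGB x
  have chain : ∀ t, t < m → c (w.getVert t, q) = c (z, q) := by
    intro t
    induction t with
    | zero => intro _; rw [Walk.getVert_zero]
    | succ n ih =>
      intro hn
      have hihn : c (w.getVert n, q) = c (z, q) := ih (by omega)
      have hA : c (w.getVert n, p) = c (z, p) := by
        refine F1 _ ?_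
        have := (hQ n (by omega)).1
        omega
      have hadj : G.Adj (w.getVert n) (w.getVert (n + 1)) :=
        w.adj_getVert_succ (by omega)
      have hd1 : G.dist (w.getVert n) (w.getVert (n + 1)) = 1 :=
        SimpleGraph.dist_eq_one_iff_adj.2 hadj
      have hd0 : G.dist (w.getVert n) (w.getVert n) = 0 := SimpleGraph.dist_self
      rcases fibq (w.getVert (n + 1)) with h | h
      · exact h
      · exfalso
        have hr := RB (w.getVert n, p) (w.getVert n, q) (w.getVert (n + 1), q)
          (by rw [pd, pd]; omega) ?_ ?_
        · rw [hA, h] at hr; exact hAB hr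
        · rw [hA, hihn]; exact fun hh => hGA hh.symm
        · rw [hihn, h]; exact hGB
  have hyq : c (y, q) = c (z, q) := chain (m - 1) (by omega)
  have hr := RB (b, p) (y, p) (y, q) (by rw [pd, pd]; omega) ?_ ?_
  · rw [hyq] at hr; exact hGB hr.symm
  · rw [hcyA]; exact Ne.symm hAB
  · rw [hcyA, hyq]; exact fun hh => hGA hh.symm

/-- Main engine: for a minimal configuration and a third fiber `k` adjacent
to `p`, the colors on the `z` and `b` columns at `k` are forced, and `k`
must also be adjacent to `q`. -/
lemma core (hG : G.Connected) (hH : H.Connected)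
    (RB : ∀ x y w : VG × VH, (G □ H).dist x y = (G □ H).dist y w →
      c x ≠ c y → c y ≠ c w → c x = c w)
    (h2 : ∀ i : VH, (((Finset.univ : Finset VG)).image (fun x => c (x, i))).card ≤ 2)
    {p q : VH} {z b : VG} (hcfg : IsCfg H c p q z b)
    (hmin : ∀ p' q' z' b', IsCfg H c p' q' z' b' → G.dist z b ≤ G.dist z' b')
    {k : VH} (hkp : H.Adj k p) (hkq : k ≠ q) :
    c (z, k) = c (z, q) ∧ c (b, k) = c (z, p) ∧ H.Adj k q := by
  have hψb : c (b, q) = c (z, p) := cfg_bq hG hH RB h2 hcfg hmin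
  obtain ⟨hpq, hAB, hGA, hGB⟩ := hcfg
  set m := G.dist z b with hm
  have hzb : z ≠ b := fun h => hAB (by rw [h])
  have hm1 : 1 ≤ m := hG.pos_dist_of_ne hzb
  have hdpq : H.dist p q = 1 := SimpleGraph.dist_eq_one_iff_adj.2 hpq
  have hdqp : H.dist q p = 1 := by rw [SimpleGraph.dist_comm]; exact hdpq
  have hdkp : H.dist k p = 1 := SimpleGraph.dist_eq_one_iff_adj.2 hkp
  have hdpp : H.dist p p = 0 := SimpleGraph.dist_self
  have hdqq : H.dist q q = 0 := SimpleGraph.dist_self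
  have hdkk : H.dist k k = 0 := SimpleGraph.dist_self
  have hdbz : G.dist b z = m := by rw [SimpleGraph.dist_comm]
  have hdzz : G.dist z z = 0 := SimpleGraph.dist_self
  have hdgbb : G.dist b b = 0 := SimpleGraph.dist_self
  have pd : ∀ (a a' : VG) (s s' : VH),
      (G □ H).dist (a, s) (a', s') = G.dist a a' + H.dist s s' :=
    fun a a' s s' => boxProd_dist hG hH a a' s s'
  have fibp : ∀ x, c (x, p) = c (z, p) ∨ c (x, p) = c (b, p) :=
    fun x => fiber_two (h2 p) (a := z) (b := b) (A := c (z, p)) (B := c (b, p))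
      rfl rfl hAB x
  have F1 : ∀ x, G.dist z x < m → c (x, p) = c (z, p) := by
    intro x hx
    rcases fibp x with h | h
    · exact h
    · exfalso
      have hc : IsCfg H c p q z x :=
        ⟨hpq, by rw [h]; exact hAB, hGA, by rw [h]; exact hGB⟩
      have := hmin _ _ _ _ hc
      omega
  obtain ⟨w, hw⟩ := hG.exists_walk_length_eq_dist z b
  have hQ : ∀ t, t ≤ m → G.dist z (w.getVert t) = t ∧ G.dist (w.getVert t) b = m - t := by
    intro t ht
    have h := getVert_dist hG w hw (t := t) (by omega)
    rwa [hw] at h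
  obtain ⟨hy1, hy2⟩ := hQ (m - 1) (by omega)
  set y := w.getVert (m - 1) with hydef
  have hdby : G.dist b y = 1 := by rw [SimpleGraph.dist_comm]; omega
  have hcyA : c (y, p) = c (z, p) := F1 y (by omega)
  -- fiber q is {Γ, A}
  have fibq : ∀ x, c (x, q) = c (z, q) ∨ c (x, q) = c (z, p) :=
    fun x => fiber_two (h2 q) (a := z) (b := b) (A := c (z, q)) (B := c (z, p))
      rfl hψb hGA x
  -- m is even
  have hmeven : m % 2 = 0 := by
    by_contra hodd
    obtain ⟨hQt1, hQt2⟩ := hQ (m / 2) (by omega)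
    have hAt : c (w.getVert (m / 2), p) = c (z, p) := F1 _ (by omega)
    have hr := RB (z, q) (w.getVert (m / 2), p) (b, p) (by rw [pd, pd]; omega) ?_ ?_
    · exact hGB hr
    · rw [hAt]; exact hGA
    · rw [hAt]; exact hAB
  have hm2 : 2 ≤ m := by omega
  obtain ⟨hQs1, hQs2⟩ := hQ (m / 2) (by omega)
  have hdsz : G.dist (w.getVert (m / 2)) z = m / 2 := by
    rw [SimpleGraph.dist_comm]; omega
  have hdbs : G.dist b (w.getVert (m / 2)) = m / 2 := by
    rw [SimpleGraph.dist_comm]; omega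
  have hcsA : c (w.getVert (m / 2), p) = c (z, p) := F1 _ (by omega)
  -- the color of (z,k) is Γ
  have hφz : c (z, k) = c (z, q) := by
    have ka : c (z, k) = c (z, p) ∨ c (z, k) = c (z, q) := by
      rcases Classical.em (c (z, k) = c (z, p)) with h | h
      · exact Or.inl h
      · exact Or.inr (RB (z, k) (z, p) (z, q) (by rw [pd, pd]; omega) h (Ne.symm hGA))
    have kb : c (z, k) = c (b, p) ∨ c (z, k) = c (z, q) := by
      rcases Classical.em (c (z, k) = c (b, p)) with h | h
      · exact Or.inl h
      · exact Or.inr (RB (z, k) (b, p) (z, q) (by rw [pd, pd]; omega) h (Ne.symm hGB))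
    rcases ka with h1 | h1
    · rcases kb with h2 | h2
      · exact absurd (h1.symm.trans h2) hAB
      · exact h2
    · exact h1
  -- the color of (b,k) is A
  have hφb : c (b, k) = c (z, p) := by
    have kc : c (b, k) = c (b, p) ∨ c (b, k) = c (z, p) := by
      rcases Classical.em (c (b, k) = c (b, p)) with h | h
      · exact Or.inl h
      · right
        have hr := RB (b, k) (b, p) (y, p) (by rw [pd, pd]; omega) h ?_
        · rw [hcyA] at hr; exact hr
        · rw [hcyA]; exact Ne.symm hAB
    rcases kc with h | h
    · exfalso
      have hr := RB (b, k) (w.getVert (m / 2), p) (z, q) (by rw [pd, pd]; omega) ?_ ?_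
      · rw [h] at hr; exact hGB hr.symm
      · rw [h, hcsA]; exact Ne.symm hAB
      · rw [hcsA]; exact Ne.symm hGA
    · exact h
  -- fiber k is {Γ, A}
  have fibk : ∀ x, c (x, k) = c (z, q) ∨ c (x, k) = c (z, p) :=
    fun x => fiber_two (h2 k) (a := z) (b := b) (A := c (z, q)) (B := c (z, p))
      hφz hφb hGA x
  -- c (y, k) = A
  have hφy : c (y, k) = c (z, p) := by
    rcases fibk y with h | h
    · exfalso
      have hc : IsCfg H c k p b y := by
        refine ⟨hkp, ?_, ?_, ?_⟩
        · rw [hφb, h]; exact Ne.symm hGA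
        · rw [hφb]; exact Ne.symm hAB
        · rw [h]; exact Ne.symm hGB
      have := hmin _ _ _ _ hc
      omega
    · exact h
  -- k must be adjacent to q
  have hadjkq : H.Adj k q := by
    by_contra hnadj
    have hqk0 : H.dist q k ≠ 0 :=
      fun hh => hkq ((hH.dist_eq_zero_iff.1 hh).symm)
    have hqk1 : H.dist q k ≠ 1 :=
      fun hh => hnadj ((SimpleGraph.dist_eq_one_iff_adj.1 hh).symm)
    have hqk2 : H.dist q k ≤ 2 := by
      have ht := hH.dist_triangle (u := q) (v := p) (w := k)
      have hpk : H.dist p k = 1 := by rw [SimpleGraph.dist_comm]; exact hdkp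
      omega
    have hqk : H.dist q k = 2 := by omega
    have hr := RB (b, p) (z, q) (y, k) (by rw [pd, pd]; omega) (Ne.symm hGB) ?_
    · rw [hφy] at hr; exact hAB hr.symm
    · rw [hφy]; exact hGA
  exact ⟨hφz, hφb, hadjkq⟩

end Core

end TCAF

open TCAF in
/-- in `G □ H` (with `G`, `H` connected, `|V(H)| ≥ 3`), if an
exact `r`-coloring `c` (`r ≥ 3`) has no rainbow 3-AP and every copy `G_i`
(the fiber of `G` over `v_i ∈ V(H)`) uses at most two colors, then for every
edge `v_i v_j` of `H` the colors used on `V(G_i) ∪ V(G_j)` number at most two. -/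
theorem two_colors_adjacent_fibers {VG VH : Type*} [Fintype VG] [Fintype VH]
    (G : SimpleGraph VG) (H : SimpleGraph VH)
    (hG : G.Connected) (hH : H.Connected) (hn : 3 ≤ Fintype.card VH)
    (r : ℕ) (hr : 3 ≤ r) (c : VG × VH → Fin r) (hc : Function.Surjective c)
    (hnr : ¬ HasRainbowAP (G □ H) 3 c)
    (h2 : ∀ i : VH, (((Finset.univ : Finset VG)).image (fun x => c (x, i))).card ≤ 2) :
    ∀ i j : VH, H.Adj i j →
      ((((Finset.univ : Finset VG)).image (fun x => c (x, i))) ∪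
       (((Finset.univ : Finset VG)).image (fun x => c (x, j)))).card ≤ 2 := by
  classical
  intro i j hij
  by_contra hcard
  push_neg at hcard
  obtain ⟨x1, hx1, x2, hx2, x3, hx3, d12, d13, d23⟩ := Finset.two_lt_card.1 hcard
  simp only [Finset.mem_union, Finset.mem_image, Finset.mem_univ, true_and] at hx1 hx2 hx3
  -- build a configuration
  have mk_cfg : ∀ (i' j' : VH), H.Adj i' j' → ∀ (y1 y2 y3 : Fin r), y1 ≠ y2 → y1 ≠ y3 →
      y2 ≠ y3 → ∀ (w1 w2 w3 : VG), c (w1, i') = y1 → c (w2, i') = y2 → c (w3, j') = y3 →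
      ∃ p q z b, IsCfg H c p q z b := by
    intro i' j' hij' y1 y2 y3 e12 e13 e23 w1 w2 w3 g1 g2 g3
    rcases fiber_two (h2 i') g1 g2 e12 w3 with h | h
    · exact ⟨i', j', w3, w2, hij', by rw [h, g2]; exact e12,
        by rw [g3, h]; exact Ne.symm e13, by rw [g3, g2]; exact Ne.symm e23⟩
    · exact ⟨i', j', w3, w1, hij', by rw [h, g1]; exact Ne.symm e12,
        by rw [g3, h]; exact Ne.symm e23, by rw [g3, g1]; exact Ne.symm e13⟩
  have hcfg : ∃ p q z b, IsCfg H c p q z b := by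
    rcases hx1 with ⟨w1, e1⟩ | ⟨w1, e1⟩ <;> rcases hx2 with ⟨w2, e2⟩ | ⟨w2, e2⟩ <;>
      rcases hx3 with ⟨w3, e3⟩ | ⟨w3, e3⟩
    · -- i i i : three colors in fiber i, contradiction
      rcases fiber_two (h2 i) e1 e2 d12 w3 with h | h
      · exact absurd (e3 ▸ h) (Ne.symm d13)
      · exact absurd (e3 ▸ h) (Ne.symm d23)
    · exact mk_cfg i j hij x1 x2 x3 d12 d13 d23 w1 w2 w3 e1 e2 e3
    · exact mk_cfg i j hij x1 x3 x2 d13 d12 (Ne.symm d23) w1 w3 w2 e1 e3 e2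
    · exact mk_cfg j i hij.symm x2 x3 x1 d23 (Ne.symm d12) (Ne.symm d13) w2 w3 w1 e2 e3 e1
    · exact mk_cfg i j hij x2 x3 x1 d23 (Ne.symm d12) (Ne.symm d13) w2 w3 w1 e2 e3 e1
    · exact mk_cfg j i hij.symm x1 x3 x2 d13 d12 (Ne.symm d23) w1 w3 w2 e1 e3 e2
    · exact mk_cfg j i hij.symm x1 x2 x3 d12 d13 d23 w1 w2 w3 e1 e2 e3
    · rcases fiber_two (h2 j) e1 e2 d12 w3 with h | h
      · exact absurd (e3 ▸ h) (Ne.symm d13)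
      · exact absurd (e3 ▸ h) (Ne.symm d23)
  -- pick a minimal configuration
  have hex : ∃ n, ∃ p q z b, IsCfg H c p q z b ∧ G.dist z b = n := by
    obtain ⟨p, q, z, b, h⟩ := hcfg
    exact ⟨G.dist z b, p, q, z, b, h, rfl⟩
  obtain ⟨p, q, z, b, hc0, hd0⟩ := Nat.find_spec hex
  have hmin : ∀ p' q' z' b', IsCfg H c p' q' z' b' → G.dist z b ≤ G.dist z' b' := by
    intro p' q' z' b' h'
    rw [hd0]
    by_contra hlt
    exact Nat.find_min hex (by omega) ⟨p', q', z', b', h', rfl⟩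
  have RB := RB_of_not hnr
  have hψb : c (b, q) = c (z, p) := cfg_bq hG hH RB h2 hc0 hmin
  obtain ⟨hpq, hAB, hGA, hGB⟩ := hc0
  have hc0' : IsCfg H c p q z b := ⟨hpq, hAB, hGA, hGB⟩
  have hcstar : IsCfg H c q p b z := by
    refine ⟨hpq.symm, ?_, ?_, Ne.symm hGB⟩
    · rw [hψb]; exact Ne.symm hGA
    · rw [hψb]; exact Ne.symm hAB
  have hmin' : ∀ p' q' z' b', IsCfg H c p' q' z' b' → G.dist b z ≤ G.dist z' b' := by
    intro p' q' z' b' h'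
    rw [G.dist_comm]
    exact hmin _ _ _ _ h'
  obtain ⟨k, hknp, hknq, hk⟩ := third_fiber hH hn hpq
  rcases hk with hkp | hkq
  · obtain ⟨_, r1b, r1adj⟩ := core hG hH RB h2 hc0' hmin hkp hknq
    obtain ⟨r2a, _, _⟩ := core hG hH RB h2 hcstar hmin' r1adj hknp
    -- r1b : c (b,k) = c (z,p) ; r2a : c (b,k) = c (b,p)
    exact hAB (r1b.symm.trans r2a)
  · obtain ⟨r2a, _, r2adj⟩ := core hG hH RB h2 hcstar hmin' hkq hknp
    obtain ⟨_, r1b, _⟩ := core hG hH RB h2 hc0' hmin r2adj hknq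
    exact hAB (r1b.symm.trans r2a)
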